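/- Let F be a forest with at least two components, C a triangle disjoint from F, and x₁,…,x_t (t ≥ 3) leaves of F coming from at least two different components. If the total number of edges from {x₁,…,x_t} to C is at least 2t+1, then the graph induced on V(F) ∪ V(C) contains two vertex-disjoint cycles, or it contains a triangle C′ such that removing V(C′) from G[V(F) ∪ V(C)] leaves a graph with fewer components than F has. -/

import Mathlib

open SimpleGraph Walk


lemma triangle_isCycle {V : Type*} {G : SimpleGraph V} {a b c : V}
    (hab : G.Adj a b) (hbc : G.Adj b c) (hca : G.Adj c a) :
    (Walk.cons hab (Walk.cons hbc (Walk.cons hca Walk.nil))).IsCycle := by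
  rw [Walk.cons_isCycle_iff]
  refine ⟨?_, ?_⟩
  · simp [Walk.isPath_def, hbc.ne, hca.ne, hab.ne, hab.ne', hbc.ne', (hca.ne).symm]
  · simp only [Walk.edges_cons, Walk.edges_nil, List.mem_cons, List.not_mem_nil, or_false]
    rintro (h | h) <;> rw [Sym2.eq_iff] at h <;>
      rcases h with ⟨h1, h2⟩ | ⟨h1, h2⟩ <;> first
      | exact hab.ne h1 | exact hbc.ne h2.symm | exact (hca.ne h2.symm).elim
      | exact hab.ne (h1.trans h2.symm) | simp_all [hab.ne, hbc.ne, hca.ne]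

lemma path_interior_two_neighbors {V : Type*} {G : SimpleGraph V} {u w : V}
    (p : G.Walk u w) (hp : p.IsPath) {v : V} (hv : v ∈ p.support)
    (h1 : v ≠ u) (h2 : v ≠ w) :
    ∃ a b : V, a ≠ b ∧ G.Adj v a ∧ G.Adj v b := by
  induction p with
  | nil => simp at hv; exact absurd hv h1
  | @cons s m e h q ih =>
    rw [Walk.support_cons, List.mem_cons] at hv
    rcases hv with rfl | hv
    · exact absurd rfl h1
    · by_cases hvm : v = m
      · subst hvm
        cases q with
        | nil => exact absurd rfl h2
        | @cons _ m2 _ h' q' =>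
          refine ⟨s, m2, ?_, h.symm, h'⟩
          rintro rfl
          have := hp.support_nodup
          simp at this
      · exact ih hp.of_cons hv hvm h2

/-- `G` contains `k` pairwise vertex-disjoint cycles. -/
def DisjointCycles {V : Type*} (G : SimpleGraph V) (k : ℕ) : Prop :=
  ∃ f : Fin k → Σ v : V, G.Walk v v,
    (∀ i, (f i).2.IsCycle) ∧
    ∀ i j, i ≠ j → ∀ v : V, v ∈ (f i).2.support → v ∉ (f j).2.support

lemma main_aux {V : Type*} [Fintype V] [DecidableEq V] (G : SimpleGraph V)
    (A B : Set V) (hAB : Disjoint A B)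
    (β0 β1 β2 : V) (hB : B = {β0, β1, β2})
    (h01 : β0 ≠ β1) (h02 : β0 ≠ β2) (h12 : β1 ≠ β2)
    (a12 : G.Adj β1 β2)
    (z u w : V) (hzA : z ∈ A) (huA : u ∈ A) (hwA : w ∈ A)
    (hzu : z ≠ u) (hzw : z ≠ w) (huw : u ≠ w)
    (hleafz : {y ∈ A | G.Adj z y}.ncard ≤ 1)
    (hz1 : G.Adj z β1) (hz2 : G.Adj z β2)
    (hu0 : G.Adj u β0) (hw0 : G.Adj w β0) :
    DisjointCycles (G.induce (A ∪ B)) 2 ∨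
    ∃ c₀ c₁ c₂ : V, c₀ ∈ A ∪ B ∧ c₁ ∈ A ∪ B ∧ c₂ ∈ A ∪ B ∧
      c₀ ≠ c₁ ∧ c₀ ≠ c₂ ∧ c₁ ≠ c₂ ∧
      G.Adj c₀ c₁ ∧ G.Adj c₀ c₂ ∧ G.Adj c₁ c₂ ∧
      Nat.card (G.induce ((A ∪ B) \ {c₀, c₁, c₂})).ConnectedComponent <
        Nat.card (G.induce A).ConnectedComponent := by
  classical
  have hβ0B : β0 ∈ B := by rw [hB]; simp
  have hβ1B : β1 ∈ B := by rw [hB]; simp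
  have hβ2B : β2 ∈ B := by rw [hB]; simp
  have hznB : ∀ b ∈ B, z ≠ b := fun b hbB h => hAB.ne_of_mem hzA hbB h
  have hunB : ∀ b ∈ B, u ≠ b := fun b hbB h => hAB.ne_of_mem huA hbB h
  have hwnB : ∀ b ∈ B, w ≠ b := fun b hbB h => hAB.ne_of_mem hwA hbB h
  by_cases hreach : (G.induce A).Reachable ⟨u, huA⟩ ⟨w, hwA⟩
  · -- two disjoint cycles
    left
    obtain ⟨p0⟩ := hreach
    set H := G.induce (A ∪ B) with hH
    let U : ↥(A ∪ B) := ⟨u, Or.inl huA⟩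
    let Wv : ↥(A ∪ B) := ⟨w, Or.inl hwA⟩
    let Z : ↥(A ∪ B) := ⟨z, Or.inl hzA⟩
    let B0 : ↥(A ∪ B) := ⟨β0, Or.inr hβ0B⟩
    let B1 : ↥(A ∪ B) := ⟨β1, Or.inr hβ1B⟩
    let B2 : ↥(A ∪ B) := ⟨β2, Or.inr hβ2B⟩
    let φ : G.induce A →g H := ⟨fun a => ⟨a.1, Or.inl a.2⟩, fun {a b} h => h⟩
    have hφinj : Function.Injective φ := fun a b h =>
      Subtype.ext (show (a : V) = b from congrArg (Subtype.val : ↥(A ∪ B) → V) h)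
    let p : (G.induce A).Walk ⟨u, huA⟩ ⟨w, hwA⟩ := p0.toPath
    have hp : p.IsPath := p0.toPath.2
    let p2 : H.Walk U Wv := p.map φ
    have hp2 : p2.IsPath := Walk.map_isPath_of_injective hφinj hp
    have hA_supp : ∀ v ∈ p2.support, (v : V) ∈ A := by
      intro v hv
      rw [show p2 = p.map φ from rfl, Walk.support_map, List.mem_map] at hv
      obtain ⟨a, _, rfl⟩ := hv
      exact a.2
    have hwb : H.Adj Wv B0 := hw0
    let q : H.Walk U B0 := p2.concat hwb
    have hB0supp : B0 ∉ p2.support := fun h =>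
      (hAB.ne_of_mem (hA_supp _ h) hβ0B) rfl
    have hq : q.IsPath := by
      apply Walk.IsPath.mk'
      rw [show q = p2.concat hwb from rfl, Walk.support_concat]
      simp only [List.concat_eq_append, List.nodup_append, List.nodup_cons,
        List.not_mem_nil, not_false_iff, List.nodup_nil, and_true, true_and,
        List.disjoint_singleton]
      exact ⟨hp2.support_nodup, fun a ha b hb => by
        rw [List.mem_singleton] at hb; subst hb; exact fun h => hB0supp (h ▸ ha)⟩
    have hbu : H.Adj B0 U := hu0.symm
    have hedge : s(B0, U) ∉ q.edges := by
      intro hmem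
      rw [show q = p2.concat hwb from rfl, Walk.edges_concat, List.concat_eq_append,
        List.mem_append, List.mem_singleton] at hmem
      rcases hmem with hmem | hmem
      · exact hB0supp (p2.fst_mem_support_of_mem_edges hmem)
      · rw [Sym2.eq_iff] at hmem
        rcases hmem with ⟨h1, h2⟩ | ⟨h1, h2⟩
        · exact hunB β0 hβ0B (congrArg Subtype.val h2)
        · exact huw (congrArg Subtype.val h2)
    let cyc1 : H.Walk B0 B0 := Walk.cons hbu q
    have hc1 : cyc1.IsCycle := (Walk.cons_isCycle_iff q hbu).mpr ⟨hq, hedge⟩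
    have hZ1 : H.Adj Z B1 := hz1
    have h12' : H.Adj B1 B2 := a12
    have h2Z : H.Adj B2 Z := hz2.symm
    let cyc2 : H.Walk Z Z := Walk.cons hZ1 (Walk.cons h12' (Walk.cons h2Z Walk.nil))
    have hc2 : cyc2.IsCycle := triangle_isCycle hZ1 h12' h2Z
    have hzsupp : Z ∉ p2.support := by
      intro hmem
      rw [show p2 = p.map φ from rfl, Walk.support_map, List.mem_map] at hmem
      obtain ⟨a, haS, hEq⟩ := hmem
      have haz : a = (⟨z, hzA⟩ : ↥A) :=
        Subtype.ext (show (a : V) = z from congrArg (Subtype.val : ↥(A ∪ B) → V) hEq)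
      have hne1 : ((⟨z, hzA⟩ : ↥A)) ≠ ⟨u, huA⟩ := fun h => hzu (congrArg Subtype.val h)
      have hne2 : ((⟨z, hzA⟩ : ↥A)) ≠ ⟨w, hwA⟩ := fun h => hzw (congrArg Subtype.val h)
      obtain ⟨a1, a2, hne, had1, had2⟩ :=
        path_interior_two_neighbors p hp (haz ▸ haS) hne1 hne2
      have h1 : (a1 : V) ∈ {y ∈ A | G.Adj z y} := ⟨a1.2, had1⟩
      have h2 : (a2 : V) ∈ {y ∈ A | G.Adj z y} := ⟨a2.2, had2⟩
      have hlt : 1 < {y ∈ A | G.Adj z y}.ncard :=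
        (Set.one_lt_ncard (Set.toFinite _)).mpr
          ⟨a1.1, h1, a2.1, h2, fun h => hne (Subtype.ext h)⟩
      omega
    have Dis : ∀ v, v ∈ cyc1.support → v ∉ cyc2.support := by
      intro v hv hv2
      have hv' : v = B0 ∨ v ∈ p2.support := by
        rw [show cyc1 = Walk.cons hbu q from rfl] at hv
        rw [Walk.support_cons, List.mem_cons,
          show q = p2.concat hwb from rfl, Walk.support_concat,
          List.mem_append, List.mem_singleton] at hv
        tauto
      have hv2' : v = Z ∨ v = B1 ∨ v = B2 := by
        rw [show cyc2 = Walk.cons hZ1 (Walk.cons h12' (Walk.cons h2Z Walk.nil))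
          from rfl] at hv2
        simp only [Walk.support_cons, Walk.support_nil, List.mem_cons,
          List.not_mem_nil, or_false, List.mem_singleton] at hv2
        tauto
      rcases hv' with rfl | hvp
      · rcases hv2' with h | h | h
        · exact hznB β0 hβ0B (congrArg Subtype.val h).symm
        · exact h01 (congrArg Subtype.val h)
        · exact h02 (congrArg Subtype.val h)
      · have hvA : (v : V) ∈ A := hA_supp v hvp
        rcases hv2' with h | h | h
        · exact hzsupp (h ▸ hvp)
        · exact hAB.ne_of_mem hvA hβ1B (congrArg Subtype.val h)
        · exact hAB.ne_of_mem hvA hβ2B (congrArg Subtype.val h)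
    refine ⟨![⟨B0, cyc1⟩, ⟨Z, cyc2⟩], ?_, ?_⟩
    · intro i
      fin_cases i
      · exact hc1
      · exact hc2
    · intro i j hij v hvi hvj
      fin_cases i <;> fin_cases j <;>
        simp only [Matrix.cons_val_zero, Matrix.cons_val_one, Matrix.head_cons,
          Fin.isValue] at hvi hvj hij
      · exact hij rfl
      · exact Dis v hvi hvj
      · exact Dis v hvj hvi
      · exact hij rfl
  · -- triangle removal
    right
    refine ⟨z, β1, β2, Or.inl hzA, Or.inr hβ1B, Or.inr hβ2B,
      hz1.ne, hz2.ne, h12, hz1, hz2, a12, ?_⟩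
    set W : Set V := (A ∪ B) \ {z, β1, β2} with hW
    have memW_of_A : ∀ a, a ∈ A → a ≠ z → a ∈ W := by
      intro a haA haz
      refine ⟨Or.inl haA, ?_⟩
      simp only [Set.mem_insert_iff, Set.mem_singleton_iff]
      push_neg
      exact ⟨haz, hAB.ne_of_mem haA hβ1B, hAB.ne_of_mem haA hβ2B⟩
    have hβ0W : β0 ∈ W := by
      refine ⟨Or.inr hβ0B, ?_⟩
      simp only [Set.mem_insert_iff, Set.mem_singleton_iff]
      push_neg
      exact ⟨(hznB β0 hβ0B).symm, h01, h02⟩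
    have huW : u ∈ W := memW_of_A u huA hzu.symm
    have hwW : w ∈ W := memW_of_A w hwA hzw.symm
    set T : (G.induce W).ConnectedComponent :=
      if h : ∃ a, a ∈ A ∧ G.Adj z a then
        (G.induce W).connectedComponentMk
          ⟨h.choose, memW_of_A _ h.choose_spec.1 h.choose_spec.2.ne'⟩
      else (G.induce W).connectedComponentMk ⟨β0, hβ0W⟩ with hT
    set g : ↥A → (G.induce W).ConnectedComponent := fun a =>
      if ha : (a : V) = z then T
      else (G.induce W).connectedComponentMk ⟨a.1, memW_of_A a.1 a.2 ha⟩ with hg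
    have huniq : ∀ a b, a ∈ A → G.Adj z a → b ∈ A → G.Adj z b → a = b := by
      intro a b ha1 ha2 hb1 hb2
      exact (Set.ncard_le_one_iff (Set.toFinite _)).mp hleafz ⟨ha1, ha2⟩ ⟨hb1, hb2⟩
    have key : ∀ (a b : ↥A), (G.induce A).Adj a b → g a = g b := by
      intro a b hab
      have hGab : G.Adj a.1 b.1 := hab
      by_cases haz : (a : V) = z
      · have hbz : (b : V) ≠ z := fun h => hGab.ne (by rw [haz, h])
        have hex : ∃ a', a' ∈ A ∧ G.Adj z a' := ⟨b.1, b.2, haz ▸ hGab⟩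
        have hch : hex.choose = b.1 :=
          huniq _ _ hex.choose_spec.1 hex.choose_spec.2 b.2 (haz ▸ hGab)
        simp only [hg, dif_pos haz, dif_neg hbz, hT, dif_pos hex]
        congr 1
        exact Subtype.ext hch
      · by_cases hbz : (b : V) = z
        · have hex : ∃ a', a' ∈ A ∧ G.Adj z a' := ⟨a.1, a.2, hbz ▸ hGab.symm⟩
          have hch : hex.choose = a.1 :=
            huniq _ _ hex.choose_spec.1 hex.choose_spec.2 a.2 (hbz ▸ hGab.symm)
          simp only [hg, dif_pos hbz, dif_neg haz, hT, dif_pos hex]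
          congr 1
          exact Subtype.ext hch.symm
        · simp only [hg, dif_neg haz, dif_neg hbz]
          exact SimpleGraph.ConnectedComponent.connectedComponentMk_eq_of_adj hGab
    have key2 : ∀ (v w : ↥A) (p : (G.induce A).Walk v w), p.IsPath → g v = g w := by
      intro v w p hp
      clear hp
      induction p with
      | nil => rfl
      | cons h q ih => exact (key _ _ h).trans ih
    set F : (G.induce A).ConnectedComponent → (G.induce W).ConnectedComponent :=
      SimpleGraph.ConnectedComponent.lift g key2 with hF
    have hgne : ∀ (a : ↥A) (h : (a : V) ≠ z),
        g a = (G.induce W).connectedComponentMk ⟨a.1, memW_of_A a.1 a.2 h⟩ := by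
      intro a h; simp only [hg, dif_neg h]
    have hsurj : Function.Surjective F := by
      intro c
      obtain ⟨vw, rfl⟩ := c.exists_rep
      obtain ⟨hv1, hv2⟩ := vw.2
      simp only [Set.mem_insert_iff, Set.mem_singleton_iff] at hv2
      push_neg at hv2
      rcases hv1 with hvA | hvB
      · refine ⟨(G.induce A).connectedComponentMk ⟨vw.1, hvA⟩, ?_⟩
        rw [hF, SimpleGraph.ConnectedComponent.lift_mk, hgne _ hv2.1]
        congr 1
      · have hv0 : vw.1 = β0 := by
          rw [hB] at hvB
          rcases hvB with h | h | h
          · exact h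
          · exact absurd h hv2.2.1
          · exact absurd h hv2.2.2
        refine ⟨(G.induce A).connectedComponentMk ⟨u, huA⟩, ?_⟩
        rw [hF, SimpleGraph.ConnectedComponent.lift_mk, hgne _ hzu.symm]
        have : (G.induce W).Adj ⟨u, huW⟩ vw := by
          show G.Adj u vw.1
          rw [hv0]; exact hu0
        exact SimpleGraph.ConnectedComponent.connectedComponentMk_eq_of_adj this
    have hninj : ¬ Function.Injective F := by
      intro hinjF
      apply hreach
      rw [← SimpleGraph.ConnectedComponent.eq]
      apply hinjF
      rw [hF, SimpleGraph.ConnectedComponent.lift_mk, SimpleGraph.ConnectedComponent.lift_mk,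
        hgne _ hzu.symm, hgne _ hzw.symm]
      have h1 : (G.induce W).Adj ⟨u, huW⟩ ⟨β0, hβ0W⟩ := hu0
      have h2 : (G.induce W).Adj ⟨w, hwW⟩ ⟨β0, hβ0W⟩ := hw0
      rw [SimpleGraph.ConnectedComponent.connectedComponentMk_eq_of_adj h1,
        SimpleGraph.ConnectedComponent.connectedComponentMk_eq_of_adj h2]
    haveI : Fintype (G.induce W).ConnectedComponent := Fintype.ofFinite _
    haveI : Fintype (G.induce A).ConnectedComponent := Fintype.ofFinite _
    rw [Nat.card_eq_fintype_card, Nat.card_eq_fintype_card]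
    exact Fintype.card_lt_of_surjective_not_injective F hsurj hninj


theorem forest_triangle_lemma {V : Type*} [Fintype V] [DecidableEq V] (G : SimpleGraph V)
    (A B : Set V) (hAB : Disjoint A B)
    (hforest : (G.induce A).IsAcyclic)
    (hω : 2 ≤ Nat.card (G.induce A).ConnectedComponent)
    (b₀ b₁ b₂ : V) (hb : B = {b₀, b₁, b₂}) (hb01 : b₀ ≠ b₁) (hb02 : b₀ ≠ b₂)
    (hb12 : b₁ ≠ b₂) (hadj01 : G.Adj b₀ b₁) (hadj02 : G.Adj b₀ b₂) (hadj12 : G.Adj b₁ b₂)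
    (t : ℕ) (ht : 3 ≤ t) (x : Fin t → V) (hinj : Function.Injective x)
    (hxA : ∀ i, x i ∈ A)
    (hleaf : ∀ i, {y ∈ A | G.Adj (x i) y}.ncard ≤ 1)
    (htwo : ∃ i j, ¬ (G.induce A).Reachable ⟨x i, hxA i⟩ ⟨x j, hxA j⟩)
    (hedges : 2 * t + 1 ≤ ∑ i : Fin t, {y ∈ B | G.Adj (x i) y}.ncard) :
    DisjointCycles (G.induce (A ∪ B)) 2 ∨
    ∃ c₀ c₁ c₂ : V, c₀ ∈ A ∪ B ∧ c₁ ∈ A ∪ B ∧ c₂ ∈ A ∪ B ∧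
      c₀ ≠ c₁ ∧ c₀ ≠ c₂ ∧ c₁ ≠ c₂ ∧
      G.Adj c₀ c₁ ∧ G.Adj c₀ c₂ ∧ G.Adj c₁ c₂ ∧
      Nat.card (G.induce ((A ∪ B) \ {c₀, c₁, c₂})).ConnectedComponent <
        Nat.card (G.induce A).ConnectedComponent := by
  classical
  -- Step 1: some `x i0` is adjacent to all three triangle vertices.
  obtain ⟨i0, hi0₀, hi0₁, hi0₂⟩ :
      ∃ i, G.Adj (x i) b₀ ∧ G.Adj (x i) b₁ ∧ G.Adj (x i) b₂ := by
    by_contra hc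
    push_neg at hc
    have hbd : ∀ i, {y ∈ B | G.Adj (x i) y}.ncard ≤ 2 := by
      intro i
      have hpair : ∀ (c d : V), c ≠ d → ({c, d} : Set V).ncard ≤ 2 := by
        intro c d h; rw [Set.ncard_pair h]
      by_cases h0 : G.Adj (x i) b₀
      · by_cases h1 : G.Adj (x i) b₁
        · have h2 := hc i h0 h1
          have hsub : {y ∈ B | G.Adj (x i) y} ⊆ ({b₀, b₁} : Set V) := by
            rintro y ⟨hyB, hyA⟩
            rw [hb] at hyB
            rcases hyB with rfl | rfl | rfl
            · exact Or.inl rfl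
            · exact Or.inr rfl
            · exact absurd hyA h2
          exact (Set.ncard_le_ncard hsub (Set.toFinite _)).trans (hpair _ _ hb01)
        · have hsub : {y ∈ B | G.Adj (x i) y} ⊆ ({b₀, b₂} : Set V) := by
            rintro y ⟨hyB, hyA⟩
            rw [hb] at hyB
            rcases hyB with rfl | rfl | rfl
            · exact Or.inl rfl
            · exact absurd hyA h1
            · exact Or.inr rfl
          exact (Set.ncard_le_ncard hsub (Set.toFinite _)).trans (hpair _ _ hb02)
      · have hsub : {y ∈ B | G.Adj (x i) y} ⊆ ({b₁, b₂} : Set V) := by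
          rintro y ⟨hyB, hyA⟩
          rw [hb] at hyB
          rcases hyB with rfl | rfl | rfl
          · exact absurd hyA h0
          · exact Or.inl rfl
          · exact Or.inr rfl
        exact (Set.ncard_le_ncard hsub (Set.toFinite _)).trans (hpair _ _ hb12)
    have hle : ∑ i : Fin t, {y ∈ B | G.Adj (x i) y}.ncard ≤ ∑ _i : Fin t, 2 :=
      Finset.sum_le_sum fun i _ => hbd i
    simp only [Finset.sum_const, Finset.card_univ, Fintype.card_fin, smul_eq_mul] at hle
    omega
  -- Step 2: some triangle vertex has two neighbours among the other leaves.
  obtain ⟨j, k, hjk, hji, hki, hcase⟩ :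
      ∃ j k, j ≠ k ∧ j ≠ i0 ∧ k ≠ i0 ∧
        ((G.Adj (x j) b₀ ∧ G.Adj (x k) b₀) ∨ (G.Adj (x j) b₁ ∧ G.Adj (x k) b₁) ∨
          (G.Adj (x j) b₂ ∧ G.Adj (x k) b₂)) := by
    by_contra hc
    push_neg at hc
    have hkey : ∀ b : V,
        (∀ j k, j ≠ k → j ≠ i0 → k ≠ i0 → G.Adj (x j) b → ¬ G.Adj (x k) b) →
        (Finset.univ.filter (fun i => G.Adj (x i) b)).card ≤ 2 := by
      intro b hbb
      have hsub : Finset.univ.filter (fun i => G.Adj (x i) b) ⊆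
          insert i0 (Finset.univ.filter (fun i => i ≠ i0 ∧ G.Adj (x i) b)) := by
        intro i hi
        simp only [Finset.mem_filter, Finset.mem_univ, true_and] at hi
        simp only [Finset.mem_insert, Finset.mem_filter, Finset.mem_univ, true_and]
        by_cases h : i = i0
        · exact Or.inl h
        · exact Or.inr ⟨h, hi⟩
      refine (Finset.card_le_card hsub).trans ((Finset.card_insert_le _ _).trans ?_)
      have hone : (Finset.univ.filter (fun i => i ≠ i0 ∧ G.Adj (x i) b)).card ≤ 1 := by
        apply Finset.card_le_one.mpr
        intro a ha c hcc
        simp only [Finset.mem_filter, Finset.mem_univ, true_and] at ha hcc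
        by_contra hne
        exact hbb a c hne ha.1 hcc.1 ha.2 hcc.2
      omega
    have hN : ∀ i, {y ∈ B | G.Adj (x i) y}.ncard =
        (if G.Adj (x i) b₀ then 1 else 0) + (if G.Adj (x i) b₁ then 1 else 0) +
          (if G.Adj (x i) b₂ then 1 else 0) := by
      intro i
      rw [hb]
      have hset : {y ∈ ({b₀, b₁, b₂} : Set V) | G.Adj (x i) y} =
          ↑(({b₀, b₁, b₂} : Finset V).filter (fun y => G.Adj (x i) y)) := by
        ext y; simp
      rw [hset, Set.ncard_coe_finset]
      rw [show ({b₀, b₁, b₂} : Finset V) = insert b₀ (insert b₁ {b₂}) from rfl]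
      rw [Finset.filter_insert, Finset.filter_insert, Finset.filter_singleton]
      split_ifs <;>
        simp [Finset.card_insert_of_notMem, Finset.mem_insert, Finset.mem_singleton,
          hb01, hb02, hb12]
    have hsum : ∑ i : Fin t, {y ∈ B | G.Adj (x i) y}.ncard =
        (Finset.univ.filter (fun i => G.Adj (x i) b₀)).card +
          (Finset.univ.filter (fun i => G.Adj (x i) b₁)).card +
          (Finset.univ.filter (fun i => G.Adj (x i) b₂)).card := by
      simp only [hN, Finset.sum_add_distrib, Finset.card_filter]
    have hc0 : ∀ j k, j ≠ k → j ≠ i0 → k ≠ i0 → G.Adj (x j) b₀ → ¬ G.Adj (x k) b₀ :=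
      fun j k h1 h2 h3 => (hc j k h1 h2 h3).1
    have hc1 : ∀ j k, j ≠ k → j ≠ i0 → k ≠ i0 → G.Adj (x j) b₁ → ¬ G.Adj (x k) b₁ :=
      fun j k h1 h2 h3 => (hc j k h1 h2 h3).2.1
    have hc2 : ∀ j k, j ≠ k → j ≠ i0 → k ≠ i0 → G.Adj (x j) b₂ → ¬ G.Adj (x k) b₂ :=
      fun j k h1 h2 h3 => (hc j k h1 h2 h3).2.2
    have := hkey b₀ hc0
    have := hkey b₁ hc1
    have := hkey b₂ hc2
    omega
  -- Step 3: conclude with `main_aux`, permuting the triangle vertices.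
  have hxjk : x j ≠ x k := fun h => hjk (hinj h)
  have hxij : x i0 ≠ x j := fun h => hji (hinj h).symm
  have hxik : x i0 ≠ x k := fun h => hki (hinj h).symm
  rcases hcase with ⟨hj0, hk0⟩ | ⟨hj1, hk1⟩ | ⟨hj2, hk2⟩
  · exact main_aux G A B hAB b₀ b₁ b₂ hb hb01 hb02 hb12 hadj12
      (x i0) (x j) (x k) (hxA i0) (hxA j) (hxA k) hxij hxik hxjk
      (hleaf i0) hi0₁ hi0₂ hj0 hk0
  · refine main_aux G A B hAB b₁ b₀ b₂ ?_ hb01.symm hb12 hb02 hadj02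
      (x i0) (x j) (x k) (hxA i0) (hxA j) (hxA k) hxij hxik hxjk
      (hleaf i0) hi0₀ hi0₂ hj1 hk1
    rw [hb]; exact Set.insert_comm _ _ _
  · refine main_aux G A B hAB b₂ b₀ b₁ ?_ hb02.symm hb12.symm hb01 hadj01
      (x i0) (x j) (x k) (hxA i0) (hxA j) (hxA k) hxij hxik hxjk
      (hleaf i0) hi0₀ hi0₁ hj2 hk2
    rw [hb]; ext y
    simp only [Set.mem_insert_iff, Set.mem_singleton_iff]
    tauto
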